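/- Let a, b be real numbers with a ≠ 0, and set c = b²/(4a). Let I ⊆ ℝ be a nonempty open interval and let Φ : I → ℝ be twice differentiable with Φ''(t) = a·Φ'(t)² + b·Φ'(t) + c for all t ∈ I, and suppose Φ'(t₀) ≠ −b/(2a) for some t₀ ∈ I. Then there exist real constants κ and μ such that for all t ∈ I one has t + κ ≠ 0 and Φ(t) = −(1/a)·log|t + κ| − (b/(2a))·t + μ. -/

import Mathlib

private lemma aux_const_of_deriv_zero {x y : ℝ} {f : ℝ → ℝ}
    (hf : ∀ t ∈ Set.Ioo x y, HasDerivAt f 0 t) :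
    ∀ s ∈ Set.Ioo x y, ∀ t ∈ Set.Ioo x y, f t = f s := by
  have key : ∀ s ∈ Set.Ioo x y, ∀ t ∈ Set.Ioo x y, s ≤ t → f t = f s := by
    intro s hs t ht hst
    have hsub : Set.Icc s t ⊆ Set.Ioo x y := fun z hz =>
      ⟨lt_of_lt_of_le hs.1 hz.1, lt_of_le_of_lt hz.2 ht.2⟩
    have hcont : ContinuousOn f (Set.Icc s t) := fun z hz =>
      ((hf z (hsub hz)).continuousAt).continuousWithinAt
    have hderiv : ∀ z ∈ Set.Ico s t, HasDerivWithinAt f 0 (Set.Ici z) z := fun z hz =>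
      (hf z (hsub ⟨hz.1, hz.2.le⟩)).hasDerivWithinAt
    exact constant_of_has_deriv_right_zero hcont hderiv t ⟨hst, le_rfl⟩
  intro s hs t ht
  rcases le_total s t with h | h
  · exact key s hs t ht h
  · exact (key t ht s hs h).symm

/-- uniqueness for Case 2: any twice differentiable solution of
`Φ'' = aΦ'² + bΦ' + c` (with `c = b²/(4a)`) on a nonempty open interval with
`Φ'(t₀) ≠ −b/(2a)` for some `t₀` is of the Case 2 form. -/
theorem stmt_11 (a b : ℝ) (ha : a ≠ 0)
    (c : ℝ) (hc : c = b ^ 2 / (4 * a))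
    (I : Set ℝ) (hI : I.Nonempty) (hIab : ∃ x y : ℝ, I = Set.Ioo x y)
    (Φ : ℝ → ℝ)
    (hΦ₁ : ∀ t ∈ I, DifferentiableAt ℝ Φ t)
    (hΦ₂ : ∀ t ∈ I, DifferentiableAt ℝ (deriv Φ) t)
    (hode : ∀ t ∈ I, deriv (deriv Φ) t = a * (deriv Φ t) ^ 2 + b * deriv Φ t + c)
    (hpt : ∃ t₀ ∈ I, deriv Φ t₀ ≠ -b / (2 * a)) :
    ∃ κ μ : ℝ, ∀ t ∈ I,
      t + κ ≠ 0 ∧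
      Φ t = -(1 / a) * Real.log |t + κ| - (b / (2 * a)) * t + μ := by
  obtain ⟨x, y, hxy⟩ := hIab
  obtain ⟨t₀, ht₀, hψ₀'⟩ := hpt
  subst hxy hc
  -- ψ = Φ' + b/(2a)
  set ψ : ℝ → ℝ := fun t => deriv Φ t + b / (2 * a) with hψdef
  have hψ₀ : ψ t₀ ≠ 0 := by
    simp only [hψdef]
    intro h
    apply hψ₀'
    have := eq_neg_of_add_eq_zero_left h
    rw [this]; ring
  -- ψ has derivative a ψ²
  have hψd : ∀ t ∈ Set.Ioo x y, HasDerivAt ψ (a * ψ t ^ 2) t := by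
    intro t ht
    have h1 : HasDerivAt (deriv Φ) (deriv (deriv Φ) t) t := (hΦ₂ t ht).hasDerivAt
    have h2 : HasDerivAt ψ (deriv (deriv Φ) t) t := h1.add_const _
    have : deriv (deriv Φ) t = a * ψ t ^ 2 := by
      rw [hode t ht, hψdef]
      field_simp
      ring
    rwa [this] at h2
  -- g(t) = -a(t-t₀) + (ψ t₀)⁻¹, u = ψ g - 1, w = u exp(-(aΦ + b/2 t))
  set g : ℝ → ℝ := fun t => -a * (t - t₀) + (ψ t₀)⁻¹ with hgdef
  set u : ℝ → ℝ := fun t => ψ t * g t - 1 with hudef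
  set w : ℝ → ℝ := fun t => u t * Real.exp (-(a * Φ t + b / 2 * t)) with hwdef
  have hgd : ∀ t : ℝ, HasDerivAt g (-a) t := by
    intro t
    have h2 : HasDerivAt g (-a * 1) t :=
      (((hasDerivAt_id t).sub_const t₀).const_mul (-a)).add_const _
    rwa [mul_one] at h2
  have hud : ∀ t ∈ Set.Ioo x y, HasDerivAt u (a * ψ t ^ 2 * g t + ψ t * (-a)) t := by
    intro t ht
    exact ((hψd t ht).mul (hgd t)).sub_const 1
  have hwd : ∀ t ∈ Set.Ioo x y, HasDerivAt w 0 t := by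
    intro t ht
    have hPd : HasDerivAt (fun t => -(a * Φ t + b / 2 * t)) (-(a * ψ t)) t := by
      have h1 : HasDerivAt (fun t => a * Φ t) (a * deriv Φ t) t :=
        ((hΦ₁ t ht).hasDerivAt).const_mul a
      have h2 : HasDerivAt (fun t : ℝ => b / 2 * t) (b / 2) t := by
        simpa using (hasDerivAt_id t).const_mul (b / 2)
      have := (h1.add h2).neg
      have heq : -(a * deriv Φ t + b / 2) = -(a * ψ t) := by
        simp only [hψdef]; field_simp
      rwa [heq] at this
    have hed : HasDerivAt (fun t => Real.exp (-(a * Φ t + b / 2 * t)))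
        (Real.exp (-(a * Φ t + b / 2 * t)) * (-(a * ψ t))) t := hPd.exp
    have := (hud t ht).mul hed
    have heq : (a * ψ t ^ 2 * g t + ψ t * -a) * Real.exp (-(a * Φ t + b / 2 * t)) +
        u t * (Real.exp (-(a * Φ t + b / 2 * t)) * -(a * ψ t)) = 0 := by
      simp only [hudef]; ring
    rwa [heq] at this
  -- w is constant, equal to w t₀ = 0
  have hw₀ : w t₀ = 0 := by
    simp only [hwdef, hudef, hgdef]
    have : ψ t₀ * (-a * (t₀ - t₀) + (ψ t₀)⁻¹) - 1 = 0 := by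
      field_simp
      ring
    rw [this, zero_mul]
  have hu0 : ∀ t ∈ Set.Ioo x y, ψ t * g t = 1 := by
    intro t ht
    have hw : w t = 0 := (aux_const_of_deriv_zero hwd t₀ ht₀ t ht).trans hw₀
    have hexp : Real.exp (-(a * Φ t + b / 2 * t)) ≠ 0 := Real.exp_ne_zero _
    have : u t = 0 := by
      rcases mul_eq_zero.1 hw with h | h
      · exact h
      · exact absurd h hexp
    simpa [hudef, sub_eq_zero] using this
  -- κ
  refine ⟨-t₀ - (a * ψ t₀)⁻¹, Φ t₀ - (-(1 / a) * Real.log (t₀ + (-t₀ - (a * ψ t₀)⁻¹)) -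
      b / (2 * a) * t₀), ?_⟩
  set κ : ℝ := -t₀ - (a * ψ t₀)⁻¹ with hκdef
  have hgκ : ∀ t : ℝ, g t = -a * (t + κ) := by
    intro t
    simp only [hgdef, hκdef]
    field_simp
    ring
  have hne : ∀ t ∈ Set.Ioo x y, t + κ ≠ 0 := by
    intro t ht h
    have := hu0 t ht
    rw [hgκ t, h, mul_zero, mul_zero] at this
    exact one_ne_zero this.symm
  -- F and its derivative
  set F : ℝ → ℝ := fun t => -(1 / a) * Real.log (t + κ) - b / (2 * a) * t with hFdef
  have hFd : ∀ t ∈ Set.Ioo x y, HasDerivAt (fun t => Φ t - F t) 0 t := by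
    intro t ht
    have hΦd : HasDerivAt Φ (deriv Φ t) t := (hΦ₁ t ht).hasDerivAt
    have hlog : HasDerivAt (fun t => Real.log (t + κ)) (t + κ)⁻¹ t := by
      have h1 : HasDerivAt (fun s : ℝ => s + κ) 1 t := (hasDerivAt_id t).add_const κ
      have h3 := (Real.hasDerivAt_log (hne t ht)).comp t h1
      rw [mul_one] at h3
      exact h3
    have hF : HasDerivAt F (-(1 / a) * (t + κ)⁻¹ - b / (2 * a)) t := by
      have h2 : HasDerivAt (fun t : ℝ => b / (2 * a) * t) (b / (2 * a)) t := by
        simpa using (hasDerivAt_id t).const_mul (b / (2 * a))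
      exact (hlog.const_mul (-(1 / a))).sub h2
    have := hΦd.sub hF
    have heq : deriv Φ t - (-(1 / a) * (t + κ)⁻¹ - b / (2 * a)) = 0 := by
      have h1 : ψ t = (g t)⁻¹ := eq_inv_of_mul_eq_one_right ((mul_comm _ _).trans (hu0 t ht))
      have h2 : deriv Φ t = (g t)⁻¹ - b / (2 * a) := by
        rw [← h1, hψdef]; ring
      rw [h2, hgκ t]
      have hta : t + κ ≠ 0 := hne t ht
      field_simp
      ring
    rwa [heq] at this
  -- Φ - F constant
  intro t ht
  refine ⟨hne t ht, ?_⟩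
  have hconst : Φ t - F t = Φ t₀ - F t₀ := aux_const_of_deriv_zero hFd t₀ ht₀ t ht
  have : Φ t = F t + (Φ t₀ - F t₀) := by linarith
  rw [this]
  simp only [hFdef, hκdef, Real.log_abs]
  try ring
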